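/- Let 0 < a < 1 and let b be a natural number with a·b ≥ 1. The Weierstrass fractal kernel W(x,y) = ∑_{n=0}^∞ aⁿ cos(bⁿ π (x−y)) is positive definite on [−1,1]: for every m ≥ 1, every choice of points x_1, …, x_m ∈ [−1,1] and real numbers c_1, …, c_m, one has ∑_{i=1}^m ∑_{j=1}^m c_i c_j W(x_i, x_j) ≥ 0. -/

import Mathlib

open Real

/-- The Weierstrass fractal kernel `W(x,y) = ∑ₙ aⁿ cos(bⁿ π (x - y))`. -/
noncomputable def weierstrassKernel (a : ℝ) (b : ℕ) (x y : ℝ) : ℝ :=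
  ∑' n : ℕ, a ^ n * Real.cos ((b : ℝ) ^ n * π * (x - y))

lemma wk_summable (a : ℝ) (ha0 : 0 < a) (ha1 : a < 1) (t : ℕ → ℝ) :
    Summable (fun n : ℕ => a ^ n * Real.cos (t n)) := by
  apply Summable.of_norm_bounded (g := fun n => a ^ n)
    (summable_geometric_of_lt_one ha0.le ha1)
  intro n
  rw [norm_mul, Real.norm_eq_abs, Real.norm_eq_abs, abs_pow, abs_of_pos ha0]
  calc a ^ n * |Real.cos (t n)| ≤ a ^ n * 1 :=
        mul_le_mul_of_nonneg_left (abs_cos_le_one _) (pow_nonneg ha0.le n)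
    _ = a ^ n := mul_one _

lemma cos_quadform (m : ℕ) (c : Fin m → ℝ) (u : Fin m → ℝ) :
    ∑ i : Fin m, ∑ j : Fin m, c i * c j * Real.cos (u i - u j)
      = (∑ i : Fin m, c i * Real.cos (u i)) ^ 2
        + (∑ i : Fin m, c i * Real.sin (u i)) ^ 2 := by
  rw [sq, sq, Finset.sum_mul_sum, Finset.sum_mul_sum, ← Finset.sum_add_distrib]
  apply Finset.sum_congr rfl
  intro i _
  rw [← Finset.sum_add_distrib]
  apply Finset.sum_congr rfl
  intro j _
  rw [Real.cos_sub]
  ring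

/-- For `0 < a < 1` and `b : ℕ` with `a * b ≥ 1`, the Weierstrass fractal
kernel is positive definite on `[-1, 1]`: for all points `x₁, …, x_m ∈ [-1,1]` and reals
`c₁, …, c_m`, we have `∑ᵢ ∑ⱼ cᵢ cⱼ W(xᵢ, xⱼ) ≥ 0`. -/
theorem weierstrassKernel_posDef
    (a : ℝ) (b : ℕ) (ha0 : 0 < a) (ha1 : a < 1) (hab : 1 ≤ a * b)
    (m : ℕ) (hm : 1 ≤ m) (x : Fin m → ℝ) (hx : ∀ i, x i ∈ Set.Icc (-1 : ℝ) 1)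
    (c : Fin m → ℝ) :
    0 ≤ ∑ i : Fin m, ∑ j : Fin m, c i * c j * weierstrassKernel a b (x i) (x j) := by
  have hsum : ∀ i j : Fin m,
      Summable (fun n : ℕ => c i * c j *
        (a ^ n * Real.cos ((b : ℝ) ^ n * π * (x i - x j)))) := by
    intro i j
    exact (wk_summable a ha0 ha1 _).mul_left _
  have key : ∀ i j : Fin m,
      c i * c j * weierstrassKernel a b (x i) (x j)
        = ∑' n : ℕ, c i * c j * (a ^ n * Real.cos ((b : ℝ) ^ n * π * (x i - x j))) := by
    intro i j
    rw [weierstrassKernel, ← tsum_mul_left]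
  simp_rw [key]
  have step1 : ∀ i : Fin m,
      ∑ j : Fin m, ∑' n : ℕ, c i * c j * (a ^ n * Real.cos ((b : ℝ) ^ n * π * (x i - x j)))
        = ∑' n : ℕ, ∑ j : Fin m, c i * c j * (a ^ n * Real.cos ((b : ℝ) ^ n * π * (x i - x j))) :=
    fun i => (Summable.tsum_finsetSum (fun j _ => hsum i j)).symm
  simp_rw [step1]
  rw [← Summable.tsum_finsetSum (fun i _ => summable_sum (fun j _ => hsum i j))]
  apply tsum_nonneg
  intro n
  have harg : ∀ i j : Fin m,
      (b : ℝ) ^ n * π * (x i - x j) = (b : ℝ) ^ n * π * x i - (b : ℝ) ^ n * π * x j := by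
    intro i j; ring
  simp_rw [harg]
  have rearr : ∀ i j : Fin m,
      c i * c j * (a ^ n * Real.cos ((b : ℝ) ^ n * π * x i - (b : ℝ) ^ n * π * x j))
        = a ^ n * (c i * c j * Real.cos ((b : ℝ) ^ n * π * x i - (b : ℝ) ^ n * π * x j)) := by
    intro i j; ring
  simp_rw [rearr, ← Finset.mul_sum]
  apply mul_nonneg (pow_nonneg ha0.le n)
  rw [cos_quadform m c (fun i => (b : ℝ) ^ n * π * x i)]
  positivity
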